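/- Greedy descent step: let ψ* be the minimizer of log J, with associated weights λ_j ∝ π_j exp(−‖f_j − Y‖²/(2ω²) + (1−ν)‖ψ* − f_j‖²/(2ω²)) so that ψ* = ∑_j λ_j f_j. If ‖f_j‖ ≤ L for all j, and ψ' minimizes log J(ψ + α(f_j − ψ)) over j ∈ {1,...,M} for given ψ ∈ R^n with ‖ψ‖ ≤ L and α ∈ (0,1], then log J(ψ') ≤ (1−α) log J(ψ) + α log J(ψ*) + 2α² A_3, where A_3 = ((1−ν)/ω²)L² + ((1−ν)/ω²)²L⁴. -/

import Mathlib

open Real Finset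

open scoped RealInnerProductSpace

lemma weighted_mgf_bound {M : ℕ} (w Z : Fin M → ℝ) (hw : ∀ k, 0 ≤ w k)
    (hw1 : ∑ k, w k = 1) (B t : ℝ) (hZ : ∀ k, |Z k| ≤ B) (ht : 0 ≤ t) :
    ∑ k, w k * Real.exp (t * Z k) ≤
      Real.exp (t * (∑ k, w k * Z k) + t^2 * B^2 / 2) := by
  set S : ℝ → ℝ := fun u => ∑ k, w k * Real.exp (u * Z k) with hSdef
  set S1 : ℝ → ℝ := fun u => ∑ k, w k * (Real.exp (u * Z k) * Z k) with hS1def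
  set S2 : ℝ → ℝ := fun u => ∑ k, w k * (Real.exp (u * Z k) * Z k * Z k) with hS2def
  set EZ : ℝ := ∑ k, w k * Z k with hEZdef
  have hSpos : ∀ u, 0 < S u := by
    intro u
    have hex : ∃ k, 0 < w k := by
      by_contra h
      push_neg at h
      have : ∑ k, w k ≤ 0 := Finset.sum_nonpos fun k _ => h k
      linarith [hw1 ▸ this]
    obtain ⟨k0, hk0⟩ := hex
    refine Finset.sum_pos' (fun k _ => mul_nonneg (hw k) (Real.exp_pos _).le) ?_
    exact ⟨k0, Finset.mem_univ _, mul_pos hk0 (Real.exp_pos _)⟩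
  have hS : ∀ u, HasDerivAt S (S1 u) u := by
    intro u
    apply HasDerivAt.fun_sum
    intro k _
    exact ((hasDerivAt_mul_const (Z k)).exp).const_mul (w k)
  have hS1 : ∀ u, HasDerivAt S1 (S2 u) u := by
    intro u
    apply HasDerivAt.fun_sum
    intro k _
    exact (((hasDerivAt_mul_const (Z k)).exp).mul_const (Z k)).const_mul (w k)
  have hS0 : S 0 = 1 := by simp [hSdef, hw1]
  have hS10 : S1 0 = EZ := by simp [hS1def, hEZdef]
  set P : ℝ → ℝ := fun u => S1 u / S u - (EZ + u * B^2) with hPdef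
  have hP : ∀ u, HasDerivAt P
      ((S2 u * S u - S1 u * S1 u) / (S u)^2 - B^2) u := by
    intro u
    exact (((hS1 u).div (hS u) (hSpos u).ne').sub
      ((hasDerivAt_mul_const (B^2)).const_add EZ))
  have hB2 : ∀ k, (Z k)^2 ≤ B^2 := by
    intro k
    calc (Z k)^2 = |Z k|^2 := (sq_abs _).symm
    _ ≤ B^2 := by
        have := hZ k
        nlinarith [abs_nonneg (Z k)]
  have hPle : ∀ u, (S2 u * S u - S1 u * S1 u) / (S u)^2 - B^2 ≤ 0 := by
    intro u
    have hS2le : S2 u ≤ B^2 * S u := by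
      rw [hS2def, hSdef]
      simp only
      rw [Finset.mul_sum]
      apply Finset.sum_le_sum
      intro k _
      have h1 : Real.exp (u * Z k) * Z k * Z k ≤ Real.exp (u * Z k) * B^2 := by
        have := hB2 k
        nlinarith [Real.exp_pos (u * Z k)]
      calc w k * (Real.exp (u * Z k) * Z k * Z k) ≤ w k * (Real.exp (u * Z k) * B^2) :=
            mul_le_mul_of_nonneg_left h1 (hw k)
      _ = B^2 * (w k * Real.exp (u * Z k)) := by ring
    have hpos := hSpos u
    have h : (S2 u * S u - S1 u * S1 u) / (S u)^2 ≤ B^2 := by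
      rw [div_le_iff₀ (by positivity)]
      nlinarith [sq_nonneg (S1 u)]
    linarith
  have hPanti : Antitone P := by
    apply antitone_of_deriv_nonpos
    · intro x
      exact (hP x).differentiableAt
    · intro x
      rw [(hP x).deriv]
      exact hPle x
  have hP0 : P 0 = 0 := by
    simp [hPdef, hS10, hS0]
  set φ : ℝ → ℝ := fun u => Real.log (S u) - (u * EZ + u^2 * B^2 / 2) with hφdef
  have hφ : ∀ u, HasDerivAt φ (P u) u := by
    intro u
    have h1 : HasDerivAt (fun u => Real.log (S u)) (S1 u / S u) u :=
      (hS u).log (hSpos u).ne'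
    have h2 : HasDerivAt (fun u : ℝ => u * EZ + u^2 * B^2 / 2)
        (EZ + (2 * u) * (B^2 / 2)) u := by
      have heq : (fun u : ℝ => u * EZ + u ^ 2 * B ^ 2 / 2)
          = fun x : ℝ => x * EZ + x ^ 2 * (B^2/2) := by
        funext x; ring
      rw [heq]
      have h2' := (hasDerivAt_mul_const (EZ) (x := u)).fun_add
        (((hasDerivAt_pow 2 u)).mul_const (B^2/2))
      refine h2'.congr_deriv ?_
      push_cast
      ring
    have := h1.fun_sub h2
    refine this.congr_deriv ?_
    rw [hPdef]
    simp only
    ring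
  have hφanti : AntitoneOn φ (Set.Ici 0) := by
    apply antitoneOn_of_deriv_nonpos (convex_Ici 0)
    · exact Continuous.continuousOn (by
        fun_prop (disch := exact fun u => (hSpos u).ne')
      ) |>.congr (fun x _ => rfl)
    · intro x _
      exact (hφ x).differentiableAt.differentiableWithinAt
    · intro x hx
      rw [(hφ x).deriv]
      rw [interior_Ici] at hx
      have : P x ≤ P 0 := hPanti (le_of_lt hx)
      linarith [hP0 ▸ this]
  have hφt : φ t ≤ φ 0 := hφanti (Set.mem_Ici.mpr le_rfl) (Set.mem_Ici.mpr ht) ht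
  have hφ0 : φ 0 = 0 := by simp [hφdef, hS0]
  have hlog : Real.log (S t) ≤ t * EZ + t^2 * B^2 / 2 := by
    have := hφ0 ▸ hφt
    rw [hφdef] at this
    simp only at this
    linarith
  calc S t = Real.exp (Real.log (S t)) := (Real.exp_log (hSpos t)).symm
  _ ≤ Real.exp (t * EZ + t^2 * B^2 / 2) := Real.exp_le_exp.mpr hlog

set_option maxHeartbeats 1600000 in
theorem greedy_descent_step (n M : ℕ) (hM : 0 < M) (Y : EuclideanSpace ℝ (Fin n))
    (f : Fin M → EuclideanSpace ℝ (Fin n)) (pi : Fin M → ℝ) (L : ℝ)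
    (hL : ∀ j, ‖f j‖ ≤ L)
    (hpi : ∀ j, 0 < pi j) (hpi1 : ∑ j, pi j = 1)
    (ν ω : ℝ) (hν : ν ∈ Set.Ioo (0:ℝ) 1) (hω : 0 < ω)
    (J : EuclideanSpace ℝ (Fin n) → ℝ)
    (hJ : ∀ ψ, J ψ = ∑ j, pi j *
      Real.exp (-‖f j - Y‖^2 / (2*ω^2) + (1-ν) * ‖ψ - f j‖^2 / (2*ω^2)))
    (ψstar : EuclideanSpace ℝ (Fin n))
    (hmin : ∀ ψ, Real.log (J ψstar) ≤ Real.log (J ψ))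
    (lam : Fin M → ℝ)
    (hlam : ∀ j, lam j =
      pi j * Real.exp (-‖f j - Y‖^2 / (2*ω^2) + (1-ν) * ‖ψstar - f j‖^2 / (2*ω^2))
        / J ψstar)
    (hfix : ψstar = ∑ j, lam j • f j)
    (ψ : EuclideanSpace ℝ (Fin n)) (hψ : ‖ψ‖ ≤ L)
    (α : ℝ) (hα : α ∈ Set.Ioc (0:ℝ) 1)
    (ψ' : EuclideanSpace ℝ (Fin n))
    (hmem : ∃ j0, ψ' = ψ + α • (f j0 - ψ))
    (hopt : ∀ j, Real.log (J ψ') ≤ Real.log (J (ψ + α • (f j - ψ)))) :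
    Real.log (J ψ') ≤ (1-α) * Real.log (J ψ) + α * Real.log (J ψstar)
      + 2 * α^2 * (((1-ν)/ω^2) * L^2 + ((1-ν)/ω^2)^2 * L^4) := by
  obtain ⟨hν0, hν1⟩ := hν
  obtain ⟨hα0, hα1⟩ := hα
  have hω2 : (0:ℝ) < ω^2 := by positivity
  set c : ℝ := (1-ν)/ω^2 with hcdef
  have hc : 0 < c := div_pos (by linarith) hω2
  haveI : Nonempty (Fin M) := ⟨⟨0, hM⟩⟩
  have hL0 : 0 ≤ L := le_trans (norm_nonneg _) (hL ⟨0, hM⟩)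
  set F : EuclideanSpace ℝ (Fin n) → Fin M → ℝ :=
    fun x k => -‖f k - Y‖^2 / (2*ω^2) + (1-ν) * ‖x - f k‖^2 / (2*ω^2) with hFdef
  have hJ' : ∀ x, J x = ∑ k, pi k * Real.exp (F x k) := hJ
  have hJpos : ∀ x, 0 < J x := fun x => by
    rw [hJ']
    exact Finset.sum_pos (fun k _ => mul_pos (hpi k) (Real.exp_pos _))
      Finset.univ_nonempty
  have hFshift : ∀ (x d : EuclideanSpace ℝ (Fin n)) (k : Fin M),
      F (x + d) k = F x k + c * ⟪x - f k, d⟫ + c/2 * ‖d‖^2 := by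
    intro x d k
    have h1 : x + d - f k = (x - f k) + d := by abel
    have h2 : ‖x + d - f k‖^2 = ‖x - f k‖^2 + 2 * ⟪x - f k, d⟫ + ‖d‖^2 := by
      rw [h1]; exact norm_add_sq_real _ _
    simp only [hFdef]
    rw [h2, hcdef]
    field_simp
    ring
  set w : Fin M → ℝ := fun k => pi k * Real.exp (F ψ k) / J ψ with hwdef
  have hw0 : ∀ k, 0 ≤ w k := fun k =>
    div_nonneg (mul_nonneg (hpi k).le (Real.exp_pos _).le) (hJpos ψ).le
  have hw1 : ∑ k, w k = 1 := by
    simp only [hwdef]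
    rw [← Finset.sum_div, ← hJ' ψ, div_self (hJpos ψ).ne']
  set m : EuclideanSpace ℝ (Fin n) := ∑ k, w k • f k with hmdef
  have hlam' : ∀ j, lam j = pi j * Real.exp (F ψstar j) / J ψstar := hlam
  have hlam0 : ∀ j, 0 ≤ lam j := fun j => by
    rw [hlam']
    exact div_nonneg (mul_nonneg (hpi j).le (Real.exp_pos _).le) (hJpos ψstar).le
  have hlam1 : ∑ j, lam j = 1 := by
    calc ∑ j, lam j = ∑ j, pi j * Real.exp (F ψstar j) / J ψstar :=
          Finset.sum_congr rfl (fun j _ => hlam' j)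
    _ = 1 := by rw [← Finset.sum_div, ← hJ' ψstar, div_self (hJpos ψstar).ne']
  -- the per-direction smoothness bound
  have key : ∀ j, Real.log (J (ψ + α • (f j - ψ))) ≤
      Real.log (J ψ) + α * c * ⟪ψ - m, f j - ψ⟫ + 2*α^2*(c*L^2 + c^2*L^4) := by
    intro j
    set d : EuclideanSpace ℝ (Fin n) := f j - ψ with hddef
    have hd : ‖d‖ ≤ 2*L := by
      calc ‖d‖ ≤ ‖f j‖ + ‖ψ‖ := norm_sub_le _ _
      _ ≤ 2*L := by linarith [hL j]
    have hdsq : ‖d‖^2 ≤ 4*L^2 := by nlinarith [norm_nonneg d]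
    set t : ℝ := α * c with htdef
    set Z : Fin M → ℝ := fun k => -⟪f k, d⟫ with hZdef
    have hZB : ∀ k, |Z k| ≤ 2*L^2 := by
      intro k
      simp only [hZdef, abs_neg]
      calc |⟪f k, d⟫| ≤ ‖f k‖ * ‖d‖ := abs_real_inner_le_norm _ _
      _ ≤ L * (2*L) := mul_le_mul (hL k) hd (norm_nonneg d) hL0
      _ = 2*L^2 := by ring
    have step1 : J (ψ + α • d) = (∑ k, (pi k * Real.exp (F ψ k)) * Real.exp (t * Z k))
        * Real.exp (α * c * ⟪ψ, d⟫ + c/2 * α^2 * ‖d‖^2) := by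
      rw [hJ', Finset.sum_mul]
      apply Finset.sum_congr rfl
      intro k _
      have hsm : ‖α • d‖^2 = α^2 * ‖d‖^2 := by
        rw [norm_smul, Real.norm_eq_abs, mul_pow, sq_abs]
      rw [hFshift ψ (α • d) k, real_inner_smul_right, hsm]
      rw [mul_assoc (pi k * Real.exp (F ψ k)),
        ← Real.exp_add (t * Z k) (α * c * ⟪ψ, d⟫ + c/2 * α^2 * ‖d‖^2),
        mul_assoc (pi k),
        ← Real.exp_add (F ψ k)
          (t * Z k + (α * c * ⟪ψ, d⟫ + c/2 * α^2 * ‖d‖^2))]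
      have hXY : F ψ k + c * (α * ⟪ψ - f k, d⟫) + c / 2 * (α ^ 2 * ‖d‖ ^ 2)
          = F ψ k + (t * Z k + (α * c * ⟪ψ, d⟫ + c / 2 * α ^ 2 * ‖d‖ ^ 2)) := by
        simp only [hZdef, htdef]
        rw [inner_sub_left]
        ring
      rw [hXY]
    have step2 : ∑ k, (pi k * Real.exp (F ψ k)) * Real.exp (t * Z k)
        = J ψ * ∑ k, w k * Real.exp (t * Z k) := by
      rw [Finset.mul_sum]
      apply Finset.sum_congr rfl
      intro k _
      have hne : J ψ ≠ 0 := (hJpos ψ).ne'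
      simp only [hwdef]
      rw [div_mul_eq_mul_div, mul_div_assoc']
      rw [eq_div_iff hne] at *
      ring
    have mgf := weighted_mgf_bound w Z hw0 hw1 (2*L^2) t hZB
      (mul_nonneg hα0.le hc.le)
    have hEZ : ∑ k, w k * Z k = -⟪m, d⟫ := by
      simp only [hZdef, hmdef]
      rw [sum_inner]
      rw [← Finset.sum_neg_distrib]
      apply Finset.sum_congr rfl
      intro k _
      rw [real_inner_smul_left]
      ring
    have hle : J (ψ + α • d) ≤ J ψ * Real.exp ((t * (-⟪m, d⟫) + t^2*(2*L^2)^2/2)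
        + (α * c * ⟪ψ, d⟫ + c/2 * α^2 * ‖d‖^2)) := by
      calc J (ψ + α • d)
          = (J ψ * ∑ k, w k * Real.exp (t * Z k))
            * Real.exp (α * c * ⟪ψ, d⟫ + c/2 * α^2 * ‖d‖^2) := by
            rw [step1, step2]
      _ ≤ (J ψ * Real.exp (t * (∑ k, w k * Z k) + t^2*(2*L^2)^2/2))
            * Real.exp (α * c * ⟪ψ, d⟫ + c/2 * α^2 * ‖d‖^2) := by
            apply mul_le_mul_of_nonneg_right _ (Real.exp_pos _).le
            exact mul_le_mul_of_nonneg_left mgf (hJpos ψ).le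
      _ = J ψ * Real.exp ((t * (-⟪m, d⟫) + t^2*(2*L^2)^2/2)
            + (α * c * ⟪ψ, d⟫ + c/2 * α^2 * ‖d‖^2)) := by
            rw [hEZ, mul_assoc, ← Real.exp_add]
    have hlog := Real.log_le_log (hJpos _) hle
    rw [Real.log_mul (hJpos ψ).ne' (Real.exp_ne_zero _), Real.log_exp] at hlog
    rw [← htdef] at hlog
    have hinner : ⟪ψ - m, d⟫ = ⟪ψ, d⟫ - ⟪m, d⟫ := inner_sub_left _ _ _
    have hq : c/2 * α^2 * ‖d‖^2 ≤ 2*α^2*(c*L^2) := by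
      have h1 : (0:ℝ) ≤ c/2*α^2 := mul_nonneg (by linarith) (sq_nonneg α)
      have h2 := mul_le_mul_of_nonneg_left hdsq h1
      have h3 : c/2*α^2*(4*L^2) = 2*α^2*(c*L^2) := by ring
      linarith
    have hring1 : t * (-⟪m, d⟫) + t * ⟪ψ, d⟫
        = t * (⟪ψ, d⟫ - ⟪m, d⟫) := by ring
    have hring2 : t^2*(2*L^2)^2/2 = 2*α^2*(c^2*L^4) := by rw [htdef]; ring
    have hring3 : 2*α^2*(c*L^2 + c^2*L^4) = 2*α^2*(c*L^2) + 2*α^2*(c^2*L^4) := by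
      ring
    rw [hinner]
    linarith
  -- combine over j using the weights lam
  have hsmul : ∑ j, lam j • (f j - ψ) = ψstar - ψ := by
    have h : ∑ j, lam j • (f j - ψ) = (∑ j, lam j • f j) - (∑ j, lam j) • ψ := by
      rw [Finset.sum_smul, ← Finset.sum_sub_distrib]
      apply Finset.sum_congr rfl
      intro j _
      rw [smul_sub]
    rw [h, hlam1, one_smul, ← hfix]
  have hI : ∑ j, lam j * ⟪ψ - m, f j - ψ⟫ = ⟪ψ - m, ψstar - ψ⟫ := by
    rw [← hsmul, inner_sum]
    apply Finset.sum_congr rfl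
    intro j _
    rw [real_inner_smul_right]
  have hcomb : Real.log (J ψ') ≤ Real.log (J ψ) + α * c * ⟪ψ - m, ψstar - ψ⟫
      + 2*α^2*(c*L^2 + c^2*L^4) := by
    have h1 : Real.log (J ψ') = ∑ j, lam j * Real.log (J ψ') := by
      rw [← Finset.sum_mul, hlam1, one_mul]
    rw [h1]
    have h2 : ∑ j, lam j * Real.log (J ψ') ≤
        ∑ j, lam j * (Real.log (J ψ) + α * c * ⟪ψ - m, f j - ψ⟫
          + 2*α^2*(c*L^2 + c^2*L^4)) := by
      apply Finset.sum_le_sum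
      intro j _
      exact mul_le_mul_of_nonneg_left (le_trans (hopt j) (key j)) (hlam0 j)
    refine le_trans h2 (le_of_eq ?_)
    calc ∑ j, lam j * (Real.log (J ψ) + α * c * ⟪ψ - m, f j - ψ⟫
          + 2*α^2*(c*L^2 + c^2*L^4))
        = ∑ j, (lam j * (Real.log (J ψ) + 2*α^2*(c*L^2 + c^2*L^4))
            + (α*c) * (lam j * ⟪ψ - m, f j - ψ⟫)) := by
          apply Finset.sum_congr rfl
          intro j _
          ring
    _ = (∑ j, lam j) * (Real.log (J ψ) + 2*α^2*(c*L^2 + c^2*L^4))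
          + (α*c) * ∑ j, lam j * ⟪ψ - m, f j - ψ⟫ := by
          rw [Finset.sum_add_distrib, ← Finset.sum_mul, ← Finset.mul_sum]
    _ = Real.log (J ψ) + α * c * ⟪ψ - m, ψstar - ψ⟫
          + 2*α^2*(c*L^2 + c^2*L^4) := by
          rw [hlam1, hI]; ring
  -- convexity: the linearized term is below the secant
  have hconv : c * ⟪ψ - m, ψstar - ψ⟫ ≤ Real.log (J ψstar) - Real.log (J ψ) := by
    have hΔexp : Real.exp (∑ k, w k * (F ψstar k - F ψ k)) ≤
        ∑ k, w k * Real.exp (F ψstar k - F ψ k) := by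
      have := convexOn_exp.map_sum_le (t := Finset.univ) (w := w)
        (p := fun k => F ψstar k - F ψ k) (fun k _ => hw0 k) hw1
        (fun k _ => Set.mem_univ _)
      simpa [smul_eq_mul] using this
    have hsum : ∑ k, w k * Real.exp (F ψstar k - F ψ k) = J ψstar / J ψ := by
      rw [hJ' ψstar, Finset.sum_div]
      apply Finset.sum_congr rfl
      intro k _
      simp only [hwdef]
      rw [div_mul_eq_mul_div, mul_assoc,
        ← Real.exp_add (F ψ k) (F ψstar k - F ψ k),
        show F ψ k + (F ψstar k - F ψ k) = F ψstar k from by ring]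
    have hlog1 : ∑ k, w k * (F ψstar k - F ψ k) ≤
        Real.log (J ψstar) - Real.log (J ψ) := by
      calc ∑ k, w k * (F ψstar k - F ψ k)
          = Real.log (Real.exp (∑ k, w k * (F ψstar k - F ψ k))) :=
            (Real.log_exp _).symm
      _ ≤ Real.log (∑ k, w k * Real.exp (F ψstar k - F ψ k)) :=
            Real.log_le_log (Real.exp_pos _) hΔexp
      _ = Real.log (J ψstar / J ψ) := by rw [hsum]
      _ = Real.log (J ψstar) - Real.log (J ψ) :=
            Real.log_div (hJpos ψstar).ne' (hJpos ψ).ne'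
    have hΔ : ∀ k, F ψstar k - F ψ k
        = c/2 * (‖ψstar‖^2 - ‖ψ‖^2) - c * ⟪ψstar - ψ, f k⟫ := by
      intro k
      have e1 : ‖ψstar - f k‖^2 = ‖ψstar‖^2 - 2*⟪ψstar, f k⟫ + ‖f k‖^2 :=
        norm_sub_sq_real _ _
      have e2 : ‖ψ - f k‖^2 = ‖ψ‖^2 - 2*⟪ψ, f k⟫ + ‖f k‖^2 :=
        norm_sub_sq_real _ _
      have e3 : ⟪ψstar - ψ, f k⟫ = ⟪ψstar, f k⟫ - ⟪ψ, f k⟫ := inner_sub_left _ _ _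
      simp only [hFdef]
      rw [e1, e2, e3, hcdef]
      field_simp
      ring
    have hminner : ∑ k, w k * ⟪ψstar - ψ, f k⟫ = ⟪ψstar - ψ, m⟫ := by
      rw [hmdef, inner_sum]
      apply Finset.sum_congr rfl
      intro k _
      rw [real_inner_smul_right]
    have hsum2 : ∑ k, w k * (F ψstar k - F ψ k)
        = c/2 * (‖ψstar‖^2 - ‖ψ‖^2) - c * ⟪ψstar - ψ, m⟫ := by
      calc ∑ k, w k * (F ψstar k - F ψ k)
          = ∑ k, (w k * (c/2 * (‖ψstar‖^2 - ‖ψ‖^2))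
              - c * (w k * ⟪ψstar - ψ, f k⟫)) := by
            apply Finset.sum_congr rfl
            intro k _
            rw [hΔ k]
            ring
      _ = (∑ k, w k) * (c/2 * (‖ψstar‖^2 - ‖ψ‖^2))
            - c * ∑ k, w k * ⟪ψstar - ψ, f k⟫ := by
            rw [Finset.sum_sub_distrib, ← Finset.sum_mul, ← Finset.mul_sum]
      _ = c/2 * (‖ψstar‖^2 - ‖ψ‖^2) - c * ⟪ψstar - ψ, m⟫ := by
            rw [hw1, hminner]; ring
    refine le_trans ?_ (hsum2 ▸ hlog1)
    have i1 : ⟪ψ - m, ψstar - ψ⟫ = ⟪ψ, ψstar - ψ⟫ - ⟪m, ψstar - ψ⟫ :=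
      inner_sub_left _ _ _
    have i2 : ⟪m, ψstar - ψ⟫ = ⟪ψstar - ψ, m⟫ := real_inner_comm _ _
    have i3 : ⟪ψ, ψstar - ψ⟫ = ⟪ψ, ψstar⟫ - ‖ψ‖^2 := by
      rw [inner_sub_right, real_inner_self_eq_norm_sq]
    have i5 : ‖ψstar - ψ‖^2 = ‖ψstar‖^2 - 2*⟪ψstar, ψ⟫ + ‖ψ‖^2 :=
      norm_sub_sq_real _ _
    have i6 : ⟪ψ, ψstar⟫ = ⟪ψstar, ψ⟫ := real_inner_comm _ _
    have i7 : 0 ≤ c * (‖ψstar‖^2 + ‖ψ‖^2 - 2*⟪ψstar, ψ⟫) :=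
      mul_nonneg hc.le (by nlinarith [sq_nonneg (‖ψstar - ψ‖)])
    rw [i1, i2, i3, i6]
    nlinarith [i7]
  calc Real.log (J ψ') ≤ Real.log (J ψ) + α * c * ⟪ψ - m, ψstar - ψ⟫
      + 2*α^2*(c*L^2 + c^2*L^4) := hcomb
  _ ≤ Real.log (J ψ) + α * (Real.log (J ψstar) - Real.log (J ψ))
      + 2*α^2*(c*L^2 + c^2*L^4) := by
      have h := mul_le_mul_of_nonneg_left hconv hα0.le
      have he : α * c * ⟪ψ - m, ψstar - ψ⟫ = α * (c * ⟪ψ - m, ψstar - ψ⟫) := by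
        ring
      linarith [he ▸ h]
  _ = (1-α) * Real.log (J ψ) + α * Real.log (J ψstar)
      + 2*α^2*(c*L^2 + c^2*L^4) := by ring
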